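/- Let S = (Xin, X0, {Xi}_{i∈I}, {Ti}_{i∈I}) be a polynomial CPDS over ℝ^d, κ ∈ ℝ[x_1,…,x_d], p ∈ ℝ[x_1,…,x_d], and w ∈ ℝ. Suppose there exist sums of squares of polynomials σ_0, σ_1, …, σ_{n_in}, ψ and, for each i ∈ I, sums of squares σ^i, μ^i_1, …, μ^i_{n_i}, γ^i_1, …, γ^i_{n0}, such that the following polynomial identities hold: (1) C(w) − p + ∑_{j=1}^{n_in} σ_j · rin_j = σ_0, where C(w) denotes the constant polynomial w; (2) for every i ∈ I, −(p ∘ Ti) + p + ∑_{j=1}^{n_i} μ^i_j · ri_j + ∑_{j=1}^{n0} γ^i_j · r0_j = σ^i, where p ∘ Ti denotes the polynomial obtained by substituting the components of Ti into p; (3) −κ + p = ψ. Then the reachable set R(S) is contained in V := {x ∈ ℝ^d | p(x) ≤ w}, and every x ∈ V satisfies κ(x) ≤ w. -/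

import Mathlib

open MvPolynomial

section

variable {d : ℕ} {ι : Type*}

/-- The reachable set of the CPDS `(Xin, X0, {Xi}, {Ti})`: the smallest subset
`R` of `ℝ^d` with `Xin ⊆ R` and `Ti '' (R ∩ Xi ∩ X0) ⊆ R` for all `i`. -/
def Reach (Xin X0 : Set (Fin d → ℝ)) (X : ι → Set (Fin d → ℝ))
    (T : ι → (Fin d → ℝ) → (Fin d → ℝ)) : Set (Fin d → ℝ) :=
  ⋂₀ {C | Xin ⊆ C ∧ ∀ i : ι, T i '' (C ∩ X i ∩ X0) ⊆ C}

lemma eval_isSumSq_nonneg {d : ℕ} {s : MvPolynomial (Fin d) ℝ} (hs : IsSumSq s)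
    (x : Fin d → ℝ) : 0 ≤ eval x s := by
  induction hs with
  | zero => simp
  | sq_add a _ ih =>
    simp only [map_add, map_mul]
    exact add_nonneg (mul_self_nonneg _) ih

lemma eval_bind₁' {d : ℕ} (g : Fin d → MvPolynomial (Fin d) ℝ)
    (p : MvPolynomial (Fin d) ℝ) (x : Fin d → ℝ) :
    eval x (bind₁ g p) = eval (fun i => eval x (g i)) p := by
  simpa using aeval_bind₁ (R := ℝ) x g p

/-- Single-template SOS certificates: if the three polynomial identities of the SOS
hierarchy hold with sums of squares `σ₀, σⱼ, σⁱ, μⁱⱼ, γⁱⱼ, ψ`, then the reachable set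
of the polynomial CPDS is contained in `V = {x | p(x) ≤ w}` and `κ(x) ≤ w` on `V`. -/
theorem sos_certificate_invariant (d : ℕ) (ι : Type*) [Fintype ι]
    -- the polynomial CPDS:
    (nin n0 : ℕ) (ni : ι → ℕ)
    (rin : Fin nin → MvPolynomial (Fin d) ℝ)
    (r0 : Fin n0 → MvPolynomial (Fin d) ℝ)
    (ri : (i : ι) → Fin (ni i) → MvPolynomial (Fin d) ℝ)
    (Tp : ι → Fin d → MvPolynomial (Fin d) ℝ)
    (Xin X0 : Set (Fin d → ℝ)) (X : ι → Set (Fin d → ℝ))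
    (hXin : Xin ⊆ {x | ∀ j : Fin nin, eval x (rin j) ≤ 0})
    (hX0 : X0 ⊆ {x | ∀ j : Fin n0, eval x (r0 j) ≤ 0})
    (hXi : ∀ i : ι, X i ⊆ {x | ∀ j : Fin (ni i), eval x (ri i j) ≤ 0})
    -- the property polynomial, the template polynomial and its bound:
    (κ p : MvPolynomial (Fin d) ℝ) (w : ℝ)
    -- the SOS certificates:
    (σ0 : MvPolynomial (Fin d) ℝ) (hσ0 : IsSumSq σ0)
    (σ : Fin nin → MvPolynomial (Fin d) ℝ) (hσ : ∀ j, IsSumSq (σ j))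
    (ψ : MvPolynomial (Fin d) ℝ) (hψ : IsSumSq ψ)
    (σi : ι → MvPolynomial (Fin d) ℝ) (hσi : ∀ i, IsSumSq (σi i))
    (μ : (i : ι) → Fin (ni i) → MvPolynomial (Fin d) ℝ) (hμ : ∀ i j, IsSumSq (μ i j))
    (γ : ι → Fin n0 → MvPolynomial (Fin d) ℝ) (hγ : ∀ i j, IsSumSq (γ i j))
    -- the three polynomial identities:
    (h1 : C w - p + ∑ j : Fin nin, σ j * rin j = σ0)
    (h2 : ∀ i : ι, -(bind₁ (Tp i) p) + p + (∑ j : Fin (ni i), μ i j * ri i j)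
      + (∑ j : Fin n0, γ i j * r0 j) = σi i)
    (h3 : -κ + p = ψ) :
    Reach Xin X0 X (fun i x => fun l : Fin d => eval x (Tp i l)) ⊆
      {x : Fin d → ℝ | eval x p ≤ w} ∧
    ∀ x ∈ {x : Fin d → ℝ | eval x p ≤ w}, eval x κ ≤ w := by
  constructor
  · apply Set.sInter_subset_of_mem
    constructor
    · intro x hx
      have h1x := congrArg (eval x) h1
      simp only [map_add, map_sub, map_sum, map_mul, eval_C] at h1x
      have hsum : ∑ j : Fin nin, eval x (σ j) * eval x (rin j) ≤ 0 :=
        Finset.sum_nonpos fun j _ =>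
          mul_nonpos_of_nonneg_of_nonpos (eval_isSumSq_nonneg (hσ j) x) (hXin hx j)
      have := eval_isSumSq_nonneg hσ0 x
      simp only [Set.mem_setOf_eq]
      linarith
    · intro i y hy
      obtain ⟨x, ⟨⟨hxV, hxXi⟩, hxX0⟩, rfl⟩ := hy
      have h2x := congrArg (eval x) (h2 i)
      simp only [map_add, map_neg, map_sum, map_mul] at h2x
      have hb : eval x (bind₁ (Tp i) p) = eval (fun l => eval x (Tp i l)) p :=
        eval_bind₁' _ _ _
      have hs1 : ∑ j : Fin (ni i), eval x (μ i j) * eval x (ri i j) ≤ 0 :=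
        Finset.sum_nonpos fun j _ =>
          mul_nonpos_of_nonneg_of_nonpos (eval_isSumSq_nonneg (hμ i j) x) (hXi i hxXi j)
      have hs2 : ∑ j : Fin n0, eval x (γ i j) * eval x (r0 j) ≤ 0 :=
        Finset.sum_nonpos fun j _ =>
          mul_nonpos_of_nonneg_of_nonpos (eval_isSumSq_nonneg (hγ i j) x) (hX0 hxX0 j)
      have := eval_isSumSq_nonneg (hσi i) x
      have hxV' : eval x p ≤ w := hxV
      simp only [Set.mem_setOf_eq]
      rw [← hb]
      linarith
  · intro x hx
    have h3x := congrArg (eval x) h3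
    simp only [map_add, map_neg] at h3x
    have := eval_isSumSq_nonneg hψ x
    have hx' : eval x p ≤ w := hx
    linarith

end
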